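/- Let σ : ℝ → ℝ be a continuous injective map with continuous inverse onto its range, taking values in (0, ∞) (a bicontinuous bijection onto the positive reals). Let g, g̃ : (Fin p → ℝ) → (Fin d → ℝ) be measurable, let γ_p be the standard Gaussian measure on ℝ^p, and define f(u) j = σ(g(u) j) and f̃(u) j = σ(g̃(u) j). If the Poisson compound of the law of f under γ_p equals the Poisson compound of the law of f̃ under γ_p (as measures on Fin d → ℕ), then the law of f under γ_p equals the law of f̃ under γ_p, and moreover the law of g under γ_p equals the law of g̃ under γ_p. -/

import Mathlib

open MeasureTheory ProbabilityTheory

/-- The standard Gaussian measure on `EuclideanSpace ℝ (Fin d)`. -/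
noncomputable def stdGaussian (d : ℕ) : Measure (Fin d → ℝ) :=
  Measure.pi fun _ => gaussianReal 0 1

/-- Poisson compound of a measure `ν` on `Fin d → ℝ`: conditionally on `y ~ ν`, the
coordinates are independent Poisson variables with rates `y j`. -/
noncomputable def poissonCompound (d : ℕ) (ν : Measure (Fin d → ℝ)) : Measure (Fin d → ℕ) :=
  ν.bind (fun y => Measure.pi (fun j => (poissonPMF (Real.toNNReal (y j))).toMeasure))

noncomputable section
open Filter
namespace PoissonRed



/-- Taylor remainder bound for `exp`. -/
lemma exp_remainder_bound (x : ℝ) (N : ℕ) :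
    |Real.exp x - ∑ m ∈ Finset.range N, x ^ m / m.factorial|
      ≤ |x| ^ N / N.factorial * Real.exp |x| := by
  have hsum : Summable (fun m : ℕ => x ^ m / m.factorial) :=
    Real.summable_pow_div_factorial x
  have hexp : Real.exp x = ∑' m : ℕ, x ^ m / m.factorial := by
    rw [Real.exp_eq_exp_ℝ, NormedSpace.exp_eq_tsum_div]
  have htail : Real.exp x - ∑ m ∈ Finset.range N, x ^ m / m.factorial
      = ∑' m : ℕ, x ^ (m + N) / (m + N).factorial := by
    rw [hexp]
    have := Summable.sum_add_tsum_nat_add N hsum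
    linarith
  rw [htail]
  have habs : ∀ m : ℕ, |x| ^ (m + N) / (m + N).factorial
      ≤ |x| ^ N / N.factorial * (|x| ^ m / m.factorial) := by
    intro m
    have h1 : (N.factorial * m.factorial : ℝ) ≤ (m + N).factorial := by
      have hdvd := Nat.factorial_mul_factorial_dvd_factorial_add N m
      have hle := Nat.le_of_dvd (Nat.factorial_pos _) hdvd
      rw [Nat.add_comm m N]
      exact_mod_cast hle
    have h3 : |x| ^ (m + N) / ((m + N).factorial : ℝ)
        ≤ |x| ^ (m + N) / (N.factorial * m.factorial : ℝ) :=
      div_le_div_of_nonneg_left (by positivity) (by positivity) h1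
    refine h3.trans (le_of_eq ?_)
    rw [pow_add]
    field_simp
  have hsum2 : Summable (fun m : ℕ => |x| ^ N / N.factorial * (|x| ^ m / m.factorial)) :=
    (Real.summable_pow_div_factorial |x|).mul_left _
  have hsum1 : Summable (fun m : ℕ => |x| ^ (m + N) / (m + N).factorial) :=
    Summable.of_nonneg_of_le (fun m => by positivity) habs hsum2
  calc |∑' m : ℕ, x ^ (m + N) / (m + N).factorial|
      ≤ ∑' m : ℕ, |x| ^ (m + N) / (m + N).factorial := by
        have := norm_tsum_le_tsum_norm (f := fun m : ℕ => x ^ (m + N) / (m + N).factorial)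
          (by simpa [Real.norm_eq_abs, abs_div, abs_pow] using hsum1)
        simpa [Real.norm_eq_abs, abs_div, abs_pow] using this
    _ ≤ ∑' m : ℕ, |x| ^ N / N.factorial * (|x| ^ m / m.factorial) :=
        Summable.tsum_le_tsum habs hsum1 hsum2
    _ = |x| ^ N / N.factorial * Real.exp |x| := by
        rw [tsum_mul_left, Real.exp_eq_exp_ℝ, NormedSpace.exp_eq_tsum_div]



variable {d : ℕ}

/-- positive orthant -/
def S (d : ℕ) : Set (Fin d → ℝ) := {y | ∀ j, 0 < y j}

/-- tilted moment integrand -/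
def itg (c : Fin d → ℝ) (k : Fin d → ℕ) (y : Fin d → ℝ) : ℝ :=
  ∏ j, (y j) ^ (k j) * Real.exp (-(c j) * y j)

/-- tilted moments -/
def mK (ν : Measure (Fin d → ℝ)) (c : Fin d → ℝ) (k : Fin d → ℕ) : ℝ :=
  ∫ y, itg c k y ∂ν

lemma single_bound {c y : ℝ} (hc : 0 < c) (hy : 0 ≤ y) (k : ℕ) :
    y ^ k * Real.exp (-c * y) ≤ k.factorial / c ^ k := by
  have h1 : (c * y) ^ k / k.factorial ≤ Real.exp (c * y) := by
    calc (c * y) ^ k / k.factorial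
        ≤ ∑ i ∈ Finset.range (k + 1), (c * y) ^ i / i.factorial := by
          apply Finset.single_le_sum (f := fun i => (c * y) ^ i / (i.factorial : ℝ))
            (fun i _ => by positivity) (Finset.self_mem_range_succ k)
      _ ≤ Real.exp (c * y) := Real.sum_le_exp_of_nonneg (by positivity) _
  have h2 : y ^ k * Real.exp (-c * y) * (c ^ k / k.factorial)
      = (c * y) ^ k / k.factorial * Real.exp (-c * y) := by
    rw [mul_pow]; ring
  have h3 : (c * y) ^ k / k.factorial * Real.exp (-c * y)
      ≤ Real.exp (c * y) * Real.exp (-c * y) := by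
    apply mul_le_mul_of_nonneg_right h1 (Real.exp_nonneg _)
  rw [← Real.exp_add] at h3
  rw [show c * y + -c * y = 0 by ring, Real.exp_zero] at h3
  have h4 : y ^ k * Real.exp (-c * y) * (c ^ k / k.factorial) ≤ 1 := by
    rw [h2]; exact h3
  rw [le_div_iff₀ (by positivity)]
  calc y ^ k * Real.exp (-c * y) * c ^ k
      = y ^ k * Real.exp (-c * y) * (c ^ k / k.factorial) * k.factorial := by
        field_simp
    _ ≤ 1 * k.factorial := by
        apply mul_le_mul_of_nonneg_right h4 (by positivity)
    _ = k.factorial := one_mul _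

/-- bound constant -/
def Bd (c : Fin d → ℝ) (k : Fin d → ℕ) : ℝ := ∏ j, ((k j).factorial / (c j) ^ (k j))

lemma itg_nonneg {c : Fin d → ℝ} {k : Fin d → ℕ} {y : Fin d → ℝ} (hy : y ∈ S d) :
    0 ≤ itg c k y := by
  apply Finset.prod_nonneg
  intro j _
  have := (hy j).le
  positivity

lemma itg_le_Bd {c : Fin d → ℝ} {k : Fin d → ℕ} (hc : ∀ j, 0 < c j) {y : Fin d → ℝ}
    (hy : y ∈ S d) : itg c k y ≤ Bd c k := by
  apply Finset.prod_le_prod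
  · intro j _
    have := (hy j).le
    positivity
  · intro j _
    exact single_bound (hc j) (hy j).le (k j)

lemma itg_abs_le {c : Fin d → ℝ} {k : Fin d → ℕ} (hc : ∀ j, 0 < c j) {y : Fin d → ℝ}
    (hy : y ∈ S d) : |itg c k y| ≤ Bd c k := by
  rw [abs_of_nonneg (itg_nonneg hy)]; exact itg_le_Bd hc hy

lemma itg_continuous (c : Fin d → ℝ) (k : Fin d → ℕ) : Continuous (itg c k) := by
  apply continuous_finset_prod
  intro j _
  apply ((continuous_apply j).pow _).mul
  apply Real.continuous_exp.comp
  exact (continuous_const.mul (continuous_apply j))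

variable {ν : Measure (Fin d → ℝ)} [IsProbabilityMeasure ν]

lemma itg_integrable (hS : ∀ᵐ y ∂ν, y ∈ S d) {c : Fin d → ℝ} (hc : ∀ j, 0 < c j)
    (k : Fin d → ℕ) : Integrable (itg c k) ν := by
  apply Integrable.mono' (integrable_const (Bd c k))
    (itg_continuous c k).aestronglyMeasurable
  filter_upwards [hS] with y hy
  rw [Real.norm_eq_abs]
  exact itg_abs_le hc hy

lemma itg_update_pow (c : Fin d → ℝ) (k : Fin d → ℕ) (j₀ : Fin d) (m : ℕ) (y : Fin d → ℝ) :
    itg c (Function.update k j₀ (k j₀ + m)) y = itg c k y * (y j₀) ^ m := by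
  unfold itg
  have hrw : (fun j => (y j) ^ (Function.update k j₀ (k j₀ + m) j) * Real.exp (-(c j) * y j))
      = Function.update (fun j => (y j) ^ (k j) * Real.exp (-(c j) * y j)) j₀
        ((y j₀) ^ (k j₀ + m) * Real.exp (-(c j₀) * y j₀)) := by
    funext j
    by_cases hj : j = j₀
    · subst hj; simp
    · rw [Function.update_of_ne hj, Function.update_of_ne hj]
  rw [hrw, Finset.prod_update_of_mem (Finset.mem_univ j₀),
    ← Finset.mul_prod_erase Finset.univ _ (Finset.mem_univ j₀), ← Finset.erase_eq]
  rw [pow_add]; ring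

lemma itg_update_c (c : Fin d → ℝ) (k : Fin d → ℕ) (j₀ : Fin d) (a : ℝ) (y : Fin d → ℝ) :
    itg (Function.update c j₀ a) k y = itg c k y * Real.exp ((c j₀ - a) * y j₀) := by
  unfold itg
  have hrw : (fun j => (y j) ^ (k j) * Real.exp (-(Function.update c j₀ a j) * y j))
      = Function.update (fun j => (y j) ^ (k j) * Real.exp (-(c j) * y j)) j₀
        ((y j₀) ^ (k j₀) * Real.exp (-a * y j₀)) := by
    funext j
    by_cases hj : j = j₀
    · subst hj; simp
    · rw [Function.update_of_ne hj, Function.update_of_ne hj]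
  rw [hrw, Finset.prod_update_of_mem (Finset.mem_univ j₀),
    ← Finset.mul_prod_erase Finset.univ _ (Finset.mem_univ j₀), ← Finset.erase_eq]
  have : Real.exp (-a * y j₀) = Real.exp (-(c j₀) * y j₀) * Real.exp ((c j₀ - a) * y j₀) := by
    rw [← Real.exp_add]; ring_nf
  rw [this]; ring


lemma choose_factorial_le (k N : ℕ) :
    ((k + N).factorial : ℝ) ≤ 2 ^ (k + N) * k.factorial * N.factorial := by
  have h1 : (k + N).choose k * k.factorial * N.factorial = (k + N).factorial := by
    have := Nat.choose_mul_factorial_mul_factorial (Nat.le_add_right k N)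
    simpa [Nat.add_sub_cancel_left] using this
  have h2 : (k + N).choose k ≤ 2 ^ (k + N) := by
    calc (k + N).choose k ≤ ∑ m ∈ Finset.range (k + N + 1), (k + N).choose m :=
          Finset.single_le_sum (fun m _ => Nat.zero_le _)
            (Finset.mem_range.mpr (Nat.lt_succ_of_le (Nat.le_add_right k N)))
      _ = 2 ^ (k + N) := Nat.sum_range_choose (k + N)
  calc ((k + N).factorial : ℝ) = ((k + N).choose k : ℝ) * k.factorial * N.factorial := by
        exact_mod_cast h1.symm
    _ ≤ 2 ^ (k + N) * k.factorial * N.factorial := by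
        have h3 : ((k + N).choose k : ℝ) ≤ (2:ℝ) ^ (k + N) := by exact_mod_cast h2
        have hk : (0:ℝ) ≤ (k.factorial : ℝ) := by positivity
        have hN : (0:ℝ) ≤ (N.factorial : ℝ) := by positivity
        apply mul_le_mul_of_nonneg_right _ hN
        exact mul_le_mul_of_nonneg_right h3 hk

lemma Bd_update (c : Fin d → ℝ) (k : Fin d → ℕ) (j₀ : Fin d) (K : ℕ) :
    Bd c (Function.update k j₀ K)
      = (K.factorial / (c j₀) ^ K) * ∏ j ∈ Finset.univ.erase j₀, ((k j).factorial / (c j) ^ (k j)) := by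
  unfold Bd
  have hrw : (fun j => ((Function.update k j₀ K j).factorial : ℝ) / (c j) ^ (Function.update k j₀ K j))
      = Function.update (fun j => ((k j).factorial : ℝ) / (c j) ^ (k j)) j₀
          ((K.factorial : ℝ) / (c j₀) ^ K) := by
    funext j
    by_cases hj : j = j₀
    · subst hj; simp
    · rw [Function.update_of_ne hj, Function.update_of_ne hj]
  rw [hrw, Finset.prod_update_of_mem (Finset.mem_univ j₀), ← Finset.erase_eq]

set_option maxHeartbeats 1000000 in
/-- Quantitative step bound for one measure. -/
lemma step_bound {μ : Measure (Fin d → ℝ)} [IsProbabilityMeasure μ]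
    (hS : ∀ᵐ y ∂μ, y ∈ S d)
    {c : Fin d → ℝ} (hc : ∀ j, 0 < c j) (j₀ : Fin d) {a : ℝ} (ha : 0 < a)
    (hnear : |c j₀ - a| ≤ c j₀ / 4) (k : Fin d → ℕ) (N : ℕ) :
    |mK μ (Function.update c j₀ a) k
        - ∑ m ∈ Finset.range N, (c j₀ - a) ^ m / m.factorial
            * mK μ c (Function.update k j₀ (k j₀ + m))|
      ≤ ((∏ j ∈ Finset.univ.erase j₀,
            ((k j).factorial / ((Function.update c j₀ (c j₀ - |c j₀ - a|)) j) ^ (k j)))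
          * (k j₀).factorial * (2 / (c j₀ - |c j₀ - a|)) ^ (k j₀)) * (2/3) ^ N := by
  set δ := c j₀ - a with hδdef
  set b := c j₀ - |δ| with hbdef
  have hδle : |δ| ≤ c j₀ / 4 := hnear
  have hb_pos : 0 < b := by
    have := hc j₀
    simp only [hbdef]
    linarith
  have hbge : c j₀ * 3 / 4 ≤ b := by simp only [hbdef]; linarith
  set c'' := Function.update c j₀ b with hc''def
  have hc'' : ∀ j, 0 < c'' j := by
    intro j
    by_cases hj : j = j₀
    · subst hj; simpa [hc''def] using hb_pos
    · rw [hc''def, Function.update_of_ne hj]; exact hc j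
  have hc' : ∀ j, 0 < Function.update c j₀ a j := by
    intro j
    by_cases hj : j = j₀
    · subst hj; simpa using ha
    · rw [Function.update_of_ne hj]; exact hc j
  set A₀ : ℝ := ∏ j ∈ Finset.univ.erase j₀, (((k j).factorial : ℝ) / (c'' j) ^ (k j)) with hA₀def
  have hA₀ : 0 ≤ A₀ := by
    apply Finset.prod_nonneg
    intro j _
    have := (hc'' j).le
    positivity
  set A : ℝ := A₀ * (k j₀).factorial * (2 / b) ^ (k j₀) with hAdef
  have hA : 0 ≤ A := by
    have : (0:ℝ) ≤ (2 / b) ^ (k j₀) := by positivity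
    have hf : (0:ℝ) ≤ (k j₀).factorial := by positivity
    positivity
  -- integrability facts
  have hint1 : Integrable (itg (Function.update c j₀ a) k) μ := itg_integrable hS hc' k
  have hint2 : ∀ m : ℕ, Integrable
      (fun y => δ ^ m / m.factorial * (itg c k y * (y j₀) ^ m)) μ := by
    intro m
    have heq : (fun y : Fin d → ℝ => δ ^ m / m.factorial * (itg c k y * (y j₀) ^ m))
        = fun y => δ ^ m / m.factorial * itg c (Function.update k j₀ (k j₀ + m)) y := by
      funext y; rw [itg_update_pow]
    rw [heq]
    exact (itg_integrable hS hc _).const_mul _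
  -- identify the difference as a single integral
  have hI : mK μ (Function.update c j₀ a) k
        - ∑ m ∈ Finset.range N, δ ^ m / m.factorial
            * mK μ c (Function.update k j₀ (k j₀ + m))
      = ∫ y, (itg (Function.update c j₀ a) k y
          - ∑ m ∈ Finset.range N, δ ^ m / m.factorial * (itg c k y * (y j₀) ^ m)) ∂μ := by
    rw [integral_sub hint1 (integrable_finset_sum _ (fun m _ => hint2 m))]
    rw [integral_finset_sum _ (fun m _ => hint2 m)]
    unfold mK
    congr 1
    apply Finset.sum_congr rfl
    intro m _
    rw [integral_const_mul]
    congr 1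
    apply integral_congr_ae
    filter_upwards with y
    rw [itg_update_pow]
  rw [hI]
  have key : ∀ᵐ y ∂μ, ‖itg (Function.update c j₀ a) k y
      - ∑ m ∈ Finset.range N, δ ^ m / m.factorial * (itg c k y * (y j₀) ^ m)‖
      ≤ A * (2/3) ^ N := by
    filter_upwards [hS] with y hy
    have hfy : itg (Function.update c j₀ a) k y
        - ∑ m ∈ Finset.range N, δ ^ m / m.factorial * (itg c k y * (y j₀) ^ m)
        = itg c k y * (Real.exp (δ * y j₀)
            - ∑ m ∈ Finset.range N, (δ * y j₀) ^ m / m.factorial) := by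
      rw [itg_update_c, mul_sub, Finset.mul_sum]
      congr 1
      apply Finset.sum_congr rfl
      intro m _
      rw [mul_pow]; ring
    rw [hfy, Real.norm_eq_abs, abs_mul, abs_of_nonneg (itg_nonneg hy)]
    have h2 := exp_remainder_bound (δ * y j₀) N
    have hy0 := hy j₀
    have step1 : itg c k y * |Real.exp (δ * y j₀)
        - ∑ m ∈ Finset.range N, (δ * y j₀) ^ m / m.factorial|
        ≤ itg c k y * (|δ * y j₀| ^ N / N.factorial * Real.exp |δ * y j₀|) :=
      mul_le_mul_of_nonneg_left h2 (itg_nonneg hy)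
    have habs : |δ * y j₀| = |δ| * y j₀ := by
      rw [abs_mul, abs_of_pos hy0]
    have step2 : itg c k y * (|δ * y j₀| ^ N / N.factorial * Real.exp |δ * y j₀|)
        = |δ| ^ N / N.factorial
          * itg c'' (Function.update k j₀ (k j₀ + N)) y := by
      have hitg : itg c'' (Function.update k j₀ (k j₀ + N)) y
          = itg c k y * (y j₀) ^ N * Real.exp (|δ| * y j₀) := by
        rw [hc''def, itg_update_c, itg_update_pow]
        have : c j₀ - b = |δ| := by rw [hbdef]; ring
        rw [this]
      rw [hitg, habs, mul_pow]
      ring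
    have step3 : |δ| ^ N / (N.factorial : ℝ)
          * itg c'' (Function.update k j₀ (k j₀ + N)) y
        ≤ |δ| ^ N / N.factorial * Bd c'' (Function.update k j₀ (k j₀ + N)) := by
      apply mul_le_mul_of_nonneg_left (itg_le_Bd hc'' hy) (by positivity)
    have step4 : |δ| ^ N / (N.factorial : ℝ) * Bd c'' (Function.update k j₀ (k j₀ + N))
        ≤ A * (2/3) ^ N := by
      rw [Bd_update]
      have hcj : c'' j₀ = b := by rw [hc''def]; simp
      rw [hcj]
      have hfact := choose_factorial_le (k j₀) N
      have hratio : 2 * |δ| ≤ 2/3 * b := by linarith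
      have hNf : (0:ℝ) < N.factorial := by positivity
      calc |δ| ^ N / (N.factorial : ℝ)
            * (((k j₀ + N).factorial : ℝ) / b ^ (k j₀ + N)
              * ∏ j ∈ Finset.univ.erase j₀, (((k j).factorial : ℝ) / (c'' j) ^ (k j)))
          = (A₀ * |δ| ^ N / (N.factorial * b ^ (k j₀ + N))) * ((k j₀ + N).factorial : ℝ) := by
            rw [hA₀def]; field_simp
        _ ≤ (A₀ * |δ| ^ N / (N.factorial * b ^ (k j₀ + N)))
              * (2 ^ (k j₀ + N) * (k j₀).factorial * N.factorial) := by
            apply mul_le_mul_of_nonneg_left hfact (by positivity)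
        _ = A₀ * (k j₀).factorial * (2 / b) ^ (k j₀) * (2 * |δ| / b) ^ N := by
            rw [pow_add, pow_add, div_pow, div_pow, mul_pow]
            field_simp
        _ ≤ A₀ * (k j₀).factorial * (2 / b) ^ (k j₀) * (2/3) ^ N := by
            apply mul_le_mul_of_nonneg_left ?_ ?_
            · apply pow_le_pow_left₀ (by positivity)
              rw [div_le_iff₀ hb_pos]
              linarith
            · have hf : (0:ℝ) ≤ (k j₀).factorial := by positivity
              positivity
        _ = A * (2/3) ^ N := by rw [hAdef]
    calc itg c k y * |Real.exp (δ * y j₀)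
        - ∑ m ∈ Finset.range N, (δ * y j₀) ^ m / m.factorial|
        ≤ itg c k y * (|δ * y j₀| ^ N / N.factorial * Real.exp |δ * y j₀|) := step1
      _ = |δ| ^ N / N.factorial * itg c'' (Function.update k j₀ (k j₀ + N)) y := step2
      _ ≤ |δ| ^ N / N.factorial * Bd c'' (Function.update k j₀ (k j₀ + N)) := step3
      _ ≤ A * (2/3) ^ N := step4
  have := norm_integral_le_of_norm_le (integrable_const (A * (2/3) ^ N)) key
  rw [integral_const] at this
  simpa [measure_univ] using this

lemma step_update {ν ν' : Measure (Fin d → ℝ)} [IsProbabilityMeasure ν] [IsProbabilityMeasure ν']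
    (hS : ∀ᵐ y ∂ν, y ∈ S d) (hS' : ∀ᵐ y ∂ν', y ∈ S d)
    {c : Fin d → ℝ} (hc : ∀ j, 0 < c j) (j₀ : Fin d) {a : ℝ} (ha : 0 < a)
    (hnear : |c j₀ - a| ≤ c j₀ / 4)
    (H : ∀ k, mK ν c k = mK ν' c k) (k : Fin d → ℕ) :
    mK ν (Function.update c j₀ a) k = mK ν' (Function.update c j₀ a) k := by
  set A : ℝ := (∏ j ∈ Finset.univ.erase j₀,
        ((k j).factorial / ((Function.update c j₀ (c j₀ - |c j₀ - a|)) j) ^ (k j)))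
      * (k j₀).factorial * (2 / (c j₀ - |c j₀ - a|)) ^ (k j₀) with hAdef
  have key : ∀ N : ℕ, |mK ν (Function.update c j₀ a) k - mK ν' (Function.update c j₀ a) k|
      ≤ 2 * A * (2/3) ^ N := by
    intro N
    have h1 := step_bound hS hc j₀ ha hnear k N
    have h2 := step_bound hS' hc j₀ ha hnear k N
    rw [← hAdef] at h1 h2
    have hT : ∑ m ∈ Finset.range N, (c j₀ - a) ^ m / m.factorial
            * mK ν c (Function.update k j₀ (k j₀ + m))
        = ∑ m ∈ Finset.range N, (c j₀ - a) ^ m / m.factorial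
            * mK ν' c (Function.update k j₀ (k j₀ + m)) := by
      apply Finset.sum_congr rfl
      intro m _
      rw [H]
    set x := mK ν (Function.update c j₀ a) k
    set y := mK ν' (Function.update c j₀ a) k
    set T := ∑ m ∈ Finset.range N, (c j₀ - a) ^ m / m.factorial
            * mK ν c (Function.update k j₀ (k j₀ + m))
    rw [← hT] at h2
    calc |x - y| = |(x - T) - (y - T)| := by ring_nf
      _ ≤ |x - T| + |y - T| := abs_sub _ _
      _ ≤ A * (2/3) ^ N + A * (2/3) ^ N := add_le_add h1 h2
      _ = 2 * A * (2/3) ^ N := by ring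
  have hlim : Filter.Tendsto (fun N : ℕ => 2 * A * (2/3:ℝ) ^ N) atTop (nhds 0) := by
    have := (tendsto_pow_atTop_nhds_zero_of_lt_one (by norm_num : (0:ℝ) ≤ 2/3)
      (by norm_num : (2/3:ℝ) < 1)).const_mul (2 * A)
    simpa using this
  have habs : |mK ν (Function.update c j₀ a) k - mK ν' (Function.update c j₀ a) k| ≤ 0 :=
    ge_of_tendsto' hlim key
  have := abs_nonneg (mK ν (Function.update c j₀ a) k - mK ν' (Function.update c j₀ a) k)
  have h0 : mK ν (Function.update c j₀ a) k - mK ν' (Function.update c j₀ a) k = 0 := by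
    rw [← abs_eq_zero]
    linarith
  linarith

/-- ladder climbing along one coordinate -/
lemma reach_aux {Q : ℝ → Prop}
    (hstep : ∀ b, 0 < b → ∀ b', 0 < b' → |b - b'| ≤ b / 4 → Q b → Q b')
    {b₁ : ℝ} (hb₁ : 0 < b₁) (hQ : Q b₁) :
    ∀ n : ℕ, ∀ b : ℝ, 0 < b → b₁ * (4/5) ^ n ≤ b → b ≤ b₁ * (5/4) ^ n → Q b := by
  intro n
  induction n with
  | zero =>
    intro b hb h1 h2
    simp only [pow_zero, mul_one] at h1 h2
    have : b = b₁ := le_antisymm h2 h1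
    rwa [this]
  | succ n ih =>
    intro b hb h1 h2
    set lo := b₁ * (4/5:ℝ) ^ n with hlo
    set hi := b₁ * (5/4:ℝ) ^ n with hhi
    have hlo_pos : 0 < lo := by positivity
    have hhi_pos : 0 < hi := by positivity
    have hlohi : lo ≤ hi := by
      apply mul_le_mul_of_nonneg_left _ hb₁.le
      apply pow_le_pow_left₀ (by norm_num)
      norm_num
    set b' := max lo (min b hi) with hb'
    have hb'_pos : 0 < b' := lt_of_lt_of_le hlo_pos (le_max_left _ _)
    have hb'_lo : lo ≤ b' := le_max_left _ _
    have hb'_hi : b' ≤ hi := max_le hlohi (min_le_right _ _)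
    have hQb' : Q b' := ih b' hb'_pos hb'_lo hb'_hi
    apply hstep b' hb'_pos b hb _ hQb'
    -- |b' - b| ≤ b' / 4
    rcases le_or_gt b lo with hble | hbgt
    · -- b ≤ lo, so b' = lo (since min b hi = b as b ≤ lo ≤ hi)
      have hmin : min b hi = b := min_eq_left (hble.trans hlohi)
      have hb'eq : b' = lo := by rw [hb', hmin, max_eq_left hble]
      rw [hb'eq]
      rw [abs_le]
      constructor
      · -- -(lo/4) ≤ lo - b, i.e. b ≤ lo + lo/4 : true since b ≤ lo
        nlinarith
      · -- lo - b ≤ lo/4 , i.e. (3/4) lo ≤ b: from h1: b ≥ b₁ (4/5)^{n+1} = (4/5) lo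
        have : b₁ * (4/5:ℝ) ^ (n+1) = (4/5) * lo := by rw [hlo]; ring
        rw [this] at h1
        nlinarith
    · rcases le_or_gt b hi with hble2 | hbgt2
      · have hb'eq : b' = b := by
          rw [hb', min_eq_left hble2, max_eq_right hbgt.le]
        rw [hb'eq]
        simp [hb'_pos.le]
        positivity
      · have hb'eq : b' = hi := by
          rw [hb', min_eq_right hbgt2.le, max_eq_right hlohi]
        rw [hb'eq]
        have : b₁ * (5/4:ℝ) ^ (n+1) = (5/4) * hi := by rw [hhi]; ring
        rw [this] at h2
        rw [abs_le]
        constructor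
        · nlinarith
        · nlinarith

lemma reach {Q : ℝ → Prop}
    (hstep : ∀ b, 0 < b → ∀ b', 0 < b' → |b - b'| ≤ b / 4 → Q b → Q b')
    {b₁ : ℝ} (hb₁ : 0 < b₁) (hQ : Q b₁) : ∀ b, 0 < b → Q b := by
  intro b hb
  -- find n with b₁ (4/5)^n ≤ b and b ≤ b₁ (5/4)^n
  obtain ⟨n₁, hn₁⟩ : ∃ n : ℕ, b₁ * (4/5:ℝ) ^ n ≤ b := by
    have htend : Filter.Tendsto (fun n : ℕ => b₁ * (4/5:ℝ) ^ n) atTop (nhds 0) := by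
      have := (tendsto_pow_atTop_nhds_zero_of_lt_one (by norm_num : (0:ℝ) ≤ 4/5)
        (by norm_num : (4/5:ℝ) < 1)).const_mul b₁
      simpa using this
    have := htend.eventually (eventually_le_nhds hb)
    exact this.exists
  obtain ⟨n₂, hn₂⟩ : ∃ n : ℕ, b ≤ b₁ * (5/4:ℝ) ^ n := by
    obtain ⟨n, hn⟩ := pow_unbounded_of_one_lt (b / b₁) (by norm_num : (1:ℝ) < 5/4)
    exact ⟨n, by rw [← div_le_iff₀' hb₁]; exact hn.le⟩
  set n := max n₁ n₂ with hn
  have g1 : b₁ * (4/5:ℝ) ^ n ≤ b := by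
    have : b₁ * (4/5:ℝ) ^ n ≤ b₁ * (4/5:ℝ) ^ n₁ := by
      apply mul_le_mul_of_nonneg_left _ hb₁.le
      apply pow_le_pow_of_le_one (by norm_num) (by norm_num) (le_max_left _ _)
    linarith
  have g2 : b ≤ b₁ * (5/4:ℝ) ^ n := by
    have : b₁ * (5/4:ℝ) ^ n₂ ≤ b₁ * (5/4:ℝ) ^ n := by
      apply mul_le_mul_of_nonneg_left _ hb₁.le
      apply pow_le_pow_right₀ (by norm_num) (le_max_right _ _)
    linarith
  exact reach_aux hstep hb₁ hQ n b hb g1 g2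

lemma allc {ν ν' : Measure (Fin d → ℝ)} [IsProbabilityMeasure ν] [IsProbabilityMeasure ν']
    (hS : ∀ᵐ y ∂ν, y ∈ S d) (hS' : ∀ᵐ y ∂ν', y ∈ S d)
    (H1 : ∀ k, mK ν (fun _ => 1) k = mK ν' (fun _ => 1) k) :
    ∀ c : Fin d → ℝ, (∀ j, 0 < c j) → ∀ k, mK ν c k = mK ν' c k := by
  have main : ∀ s : Finset (Fin d), ∀ c : Fin d → ℝ, (∀ j, 0 < c j) → (∀ j ∉ s, c j = 1) →
      ∀ k, mK ν c k = mK ν' c k := by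
    intro s
    induction s using Finset.induction_on with
    | empty =>
      intro c hc hout k
      have : c = fun _ => 1 := funext fun j => hout j (Finset.notMem_empty j)
      rw [this]
      exact H1 k
    | @insert j₀ s hj₀ ih =>
      intro c hc hout k
      set c₂ := Function.update c j₀ 1 with hc₂def
      have hc₂pos : ∀ j, 0 < c₂ j := by
        intro j
        by_cases hjj : j = j₀
        · subst hjj; simp [hc₂def]
        · rw [hc₂def, Function.update_of_ne hjj]; exact hc j
      have hc₂out : ∀ j ∉ s, c₂ j = 1 := by
        intro j hj
        by_cases hjj : j = j₀
        · subst hjj; simp [hc₂def]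
        · rw [hc₂def, Function.update_of_ne hjj]
          exact hout j (by simp [Finset.mem_insert, hjj, hj])
      have H₂ : ∀ k, mK ν c₂ k = mK ν' c₂ k := ih c₂ hc₂pos hc₂out
      have hbase : ∀ k, mK ν (Function.update c₂ j₀ 1) k = mK ν' (Function.update c₂ j₀ 1) k := by
        have : Function.update c₂ j₀ 1 = c₂ := by
          rw [hc₂def, Function.update_idem]
        rw [this]
        exact H₂
      have hreach := reach
        (Q := fun b => ∀ k, mK ν (Function.update c₂ j₀ b) k = mK ν' (Function.update c₂ j₀ b) k)
        ?_ one_pos hbase (c j₀) (hc j₀)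
      · have hceq : Function.update c₂ j₀ (c j₀) = c := by
          funext j
          by_cases hjj : j = j₀
          · subst hjj; simp
          · rw [Function.update_of_ne hjj, hc₂def, Function.update_of_ne hjj]
        rw [← hceq]
        exact hreach k
      · intro b hb b' hb' hnear hQ k'
        have hupd : Function.update c₂ j₀ b' = Function.update (Function.update c₂ j₀ b) j₀ b' := by
          funext j
          rcases eq_or_ne j j₀ with hjj | hjj
          · subst hjj; simp
          · simp [Function.update_of_ne hjj]
        rw [hupd]
        have hcpos : ∀ j, 0 < Function.update c₂ j₀ b j := by
          intro j
          by_cases hjj : j = j₀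
          · subst hjj; simpa using hb
          · rw [Function.update_of_ne hjj]; exact hc₂pos j
        apply step_update hS hS' hcpos j₀ hb' ?_ hQ
        simpa using hnear
  intro c hc k
  exact main Finset.univ c hc (fun j hj => absurd (Finset.mem_univ j) hj) k

lemma lap {ν ν' : Measure (Fin d → ℝ)} [IsProbabilityMeasure ν] [IsProbabilityMeasure ν']
    (hS : ∀ᵐ y ∂ν, y ∈ S d) (hS' : ∀ᵐ y ∂ν', y ∈ S d)
    (hall : ∀ c : Fin d → ℝ, (∀ j, 0 < c j) → ∀ k, mK ν c k = mK ν' c k)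
    (k : Fin d → ℕ) :
    ∫ y, ∏ j, Real.exp (-(k j : ℝ) * y j) ∂ν = ∫ y, ∏ j, Real.exp (-(k j : ℝ) * y j) ∂ν' := by
  set c : ℕ → Fin d → ℝ := fun n j => max (k j : ℝ) (1/((n:ℝ)+1)) with hcdef
  have hcpos : ∀ n j, 0 < c n j := by
    intro n j
    apply lt_max_of_lt_right
    positivity
  have hmk : ∀ n, mK ν (c n) 0 = mK ν' (c n) 0 := fun n => hall (c n) (hcpos n) 0
  have hitg0 : ∀ (cc : Fin d → ℝ) (y : Fin d → ℝ), itg cc 0 y = ∏ j, Real.exp (-(cc j) * y j) := by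
    intro cc y
    unfold itg
    simp
  have hmeas : ∀ n, AEStronglyMeasurable (itg (c n) (0 : Fin d → ℕ)) ν :=
    fun n => (itg_continuous _ _).aestronglyMeasurable
  have hbound : ∀ (μ : Measure (Fin d → ℝ)), (∀ᵐ y ∂μ, y ∈ S d) → ∀ n : ℕ,
      ∀ᵐ y ∂μ, ‖itg (c n) (0 : Fin d → ℕ) y‖ ≤ (1:ℝ) := by
    intro μ hSμ n
    filter_upwards [hSμ] with y hy
    rw [Real.norm_eq_abs, abs_of_nonneg (itg_nonneg hy), hitg0]
    apply Finset.prod_le_one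
    · intro j _
      positivity
    · intro j _
      apply Real.exp_le_one_iff.mpr
      have := hcpos n j
      have := hy j
      nlinarith
  have hptw : ∀ y : Fin d → ℝ, Filter.Tendsto (fun n => itg (c n) (0 : Fin d → ℕ) y) atTop
      (nhds (∏ j, Real.exp (-(k j : ℝ) * y j))) := by
    intro y
    have h0 : Filter.Tendsto (fun n : ℕ => 1/((n:ℝ)+1)) atTop (nhds 0) :=
      tendsto_one_div_add_atTop_nhds_zero_nat
    have : Filter.Tendsto (fun n => itg (c n) (0 : Fin d → ℕ) y) atTop
        (nhds (itg (fun j => max (k j : ℝ) 0) 0 y)) := by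
      have hcont : Continuous (fun t : ℝ => itg (fun j => max (k j : ℝ) t) 0 y) := by
        unfold itg
        apply continuous_finset_prod
        intro j _
        simp only [Pi.zero_apply, pow_zero, one_mul]
        apply Real.continuous_exp.comp
        exact (continuous_const.max continuous_id).neg.mul continuous_const
      exact (hcont.tendsto 0).comp h0
    have hmax : (fun j : Fin d => max (k j : ℝ) 0) = fun j => (k j : ℝ) :=
      funext fun j => max_eq_left (by positivity)
    rw [hmax, hitg0] at this
    exact this
  have hDCT : ∀ (μ : Measure (Fin d → ℝ)), IsProbabilityMeasure μ → (∀ᵐ y ∂μ, y ∈ S d) →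
      Filter.Tendsto (fun n => mK μ (c n) 0) atTop
        (nhds (∫ y, ∏ j, Real.exp (-(k j : ℝ) * y j) ∂μ)) := by
    intro μ hPμ hSμ
    apply tendsto_integral_of_dominated_convergence (fun _ => (1:ℝ))
      (fun n => (itg_continuous _ _).aestronglyMeasurable)
      (integrable_const 1) (hbound μ hSμ)
    filter_upwards with y using hptw y
  have t1 := hDCT ν inferInstance hS
  have t2 := hDCT ν' inferInstance hS'
  have : (fun n => mK ν (c n) 0) = (fun n => mK ν' (c n) 0) := funext hmk
  rw [this] at t1
  exact tendsto_nhds_unique t1 t2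

section SW
variable {d : ℕ}

abbrev X (d : ℕ) := Fin d → (Set.Icc (0:ℝ) 1)

/-- coordinate functions on the cube -/
def coord (j : Fin d) : C(X d, ℝ) :=
  ⟨fun x => ((x j : ℝ)), continuous_subtype_val.comp (continuous_apply j)⟩

lemma cmInt (μ : Measure (X d)) [IsProbabilityMeasure μ] (f : C(X d, ℝ)) :
    Integrable f μ := by
  apply Integrable.mono' (integrable_const ‖f‖) f.continuous.aestronglyMeasurable
  exact ae_of_all _ fun x => f.norm_coe_le_norm x

lemma prod_coord_apply (kk : Fin d → ℕ) (x : X d) :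
    (∏ j, (coord j) ^ (kk j)) x = ∏ j, ((x j : ℝ)) ^ (kk j) := by
  rw [ContinuousMap.coe_prod]
  rw [Finset.prod_apply]
  apply Finset.prod_congr rfl
  intro j _
  simp [coord]

lemma integral_eq_onC (ρ ρ' : Measure (X d)) [IsProbabilityMeasure ρ] [IsProbabilityMeasure ρ']
    (hmono : ∀ kk : Fin d → ℕ,
      ∫ x, ∏ j, ((x j : ℝ)) ^ (kk j) ∂ρ = ∫ x, ∏ j, ((x j : ℝ)) ^ (kk j) ∂ρ')
    (f : C(X d, ℝ)) : ∫ x, f x ∂ρ = ∫ x, f x ∂ρ' := by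
  set A : Subalgebra ℝ C(X d, ℝ) := Algebra.adjoin ℝ (Set.range (coord (d := d))) with hAdef
  have hsep : A.SeparatesPoints := by
    intro x y hxy
    have hj : ∃ j, x j ≠ y j := by
      by_contra hcon
      push_neg at hcon
      exact hxy (funext hcon)
    obtain ⟨j, hj⟩ := hj
    refine ⟨coord j, ⟨coord j, Algebra.subset_adjoin ⟨j, rfl⟩, rfl⟩, ?_⟩
    simp only [coord, ContinuousMap.coe_mk]
    exact fun hc => hj (Subtype.coe_injective hc)
  have hmon : ∀ f ∈ Submonoid.closure (Set.range (coord (d := d))),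
      ∃ kk : Fin d → ℕ, f = ∏ j, (coord j) ^ (kk j) := by
    intro f hf
    induction hf using Submonoid.closure_induction with
    | mem f hf =>
      obtain ⟨j, rfl⟩ := hf
      refine ⟨Pi.single j 1, ?_⟩
      rw [Finset.prod_eq_single j]
      · simp
      · intro j' _ hj'
        rw [Pi.single_eq_of_ne hj', pow_zero]
      · intro hj; exact absurd (Finset.mem_univ j) hj
    | one => exact ⟨0, by simp⟩
    | mul f g _ _ ihf ihg =>
      obtain ⟨k1, rfl⟩ := ihf
      obtain ⟨k2, rfl⟩ := ihg
      refine ⟨k1 + k2, ?_⟩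
      rw [← Finset.prod_mul_distrib]
      apply Finset.prod_congr rfl
      intro j _
      rw [Pi.add_apply, pow_add]
  have hmonInt : ∀ f ∈ Submonoid.closure (Set.range (coord (d := d))),
      ∫ x, f x ∂ρ = ∫ x, f x ∂ρ' := by
    intro f hf
    obtain ⟨kk, rfl⟩ := hmon f hf
    have h1 : ∀ (μ : Measure (X d)), ∫ x, (∏ j, (coord j) ^ (kk j)) x ∂μ
        = ∫ x, ∏ j, ((x j : ℝ)) ^ (kk j) ∂μ := by
      intro μ
      apply integral_congr_ae
      exact ae_of_all _ fun x => prod_coord_apply kk x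
    rw [h1, h1]
    exact hmono kk
  have hspan' : ∀ f ∈ Submodule.span ℝ
      ((Submonoid.closure (Set.range (coord (d := d))) : Submonoid C(X d, ℝ)) : Set C(X d, ℝ)),
      ∫ x, f x ∂ρ = ∫ x, f x ∂ρ' := by
    intro f hf
    induction hf using Submodule.span_induction with
    | mem g hg => exact hmonInt g hg
    | zero => simp
    | add g h _ _ ihg ihh =>
      simp only [ContinuousMap.add_apply]
      rw [integral_add (cmInt ρ g) (cmInt ρ h), integral_add (cmInt ρ' g) (cmInt ρ' h), ihg, ihh]
    | smul r g _ ihg =>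
      simp only [ContinuousMap.smul_apply]
      rw [integral_smul, integral_smul, ihg]
  have hspan : ∀ f ∈ A, ∫ x, f x ∂ρ = ∫ x, f x ∂ρ' := by
    intro f hf
    apply hspan'
    rw [← Algebra.adjoin_eq_span]
    exact hf
  -- density
  have htop : A.topologicalClosure = ⊤ :=
    ContinuousMap.subalgebra_topologicalClosure_eq_top_of_separatesPoints A hsep
  have hfmem : f ∈ closure (A : Set C(X d, ℝ)) := by
    have : f ∈ A.topologicalClosure := by rw [htop]; trivial
    exact this
  obtain ⟨u, huA, hu⟩ := mem_closure_iff_seq_limit.mp hfmem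
  have hlim : ∀ (μ : Measure (X d)), IsProbabilityMeasure μ →
      Filter.Tendsto (fun n => ∫ x, u n x ∂μ) atTop (nhds (∫ x, f x ∂μ)) := by
    intro μ hμ
    rw [tendsto_iff_norm_sub_tendsto_zero]
    have hbound : ∀ n, ‖∫ x, u n x ∂μ - ∫ x, f x ∂μ‖ ≤ ‖u n - f‖ := by
      intro n
      rw [← integral_sub (cmInt μ (u n)) (cmInt μ f)]
      have := norm_integral_le_of_norm_le (μ := μ) (f := fun x => u n x - f x)
        (integrable_const ‖u n - f‖) (ae_of_all _ fun x => by
          have := (u n - f).norm_coe_le_norm x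
          simpa using this)
      rw [integral_const] at this
      simpa [measure_univ] using this
    have hnorm : Filter.Tendsto (fun n => ‖u n - f‖) atTop (nhds 0) := by
      rw [← tendsto_iff_norm_sub_tendsto_zero]
      exact hu
    apply squeeze_zero (fun n => norm_nonneg _) hbound hnorm
  have h1 := hlim ρ inferInstance
  have h2 := hlim ρ' inferInstance
  have heq : (fun n => ∫ x, u n x ∂ρ) = (fun n => ∫ x, u n x ∂ρ') :=
    funext fun n => hspan (u n) (huA n)
  rw [heq] at h1
  exact tendsto_nhds_unique h1 h2

lemma measure_eq_onX (ρ ρ' : Measure (X d)) [IsProbabilityMeasure ρ] [IsProbabilityMeasure ρ']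
    (hmono : ∀ kk : Fin d → ℕ,
      ∫ x, ∏ j, ((x j : ℝ)) ^ (kk j) ∂ρ = ∫ x, ∏ j, ((x j : ℝ)) ^ (kk j) ∂ρ') :
    ρ = ρ' := by
  apply ext_of_forall_lintegral_eq_of_IsFiniteMeasure
  intro f
  have hfc : Continuous fun x => ((f x : ℝ)) := NNReal.continuous_coe.comp f.continuous
  set fc : C(X d, ℝ) := ⟨fun x => ((f x : ℝ)), hfc⟩ with hfcdef
  have hint : ∀ (μ : Measure (X d)) [IsProbabilityMeasure μ], Integrable (fun x => ((f x : ℝ))) μ :=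
    fun μ _ => cmInt μ fc
  rw [lintegral_coe_eq_integral (fun x => f x) (hint ρ), lintegral_coe_eq_integral (fun x => f x) (hint ρ')]
  congr 1
  exact integral_eq_onC ρ ρ' hmono fc

def Phi (d : ℕ) : (Fin d → ℝ) → X d :=
  fun y j => Set.projIcc 0 1 zero_le_one (Real.exp (-(y j)))

lemma Phi_measurable : Measurable (Phi d) := by
  apply measurable_pi_lambda
  intro j
  apply Continuous.measurable
  exact continuous_projIcc.comp (Real.continuous_exp.comp (continuous_apply j).neg)

def Psi (d : ℕ) : X d → (Fin d → ℝ) :=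
  fun x j => -Real.log ((x j : ℝ))

lemma Psi_measurable : Measurable (Psi d) := by
  apply measurable_pi_lambda
  intro j
  apply Measurable.neg
  exact Real.measurable_log.comp (measurable_subtype_coe.comp (measurable_pi_apply j))

lemma measure_eq_of_lap {ν ν' : Measure (Fin d → ℝ)}
    [IsProbabilityMeasure ν] [IsProbabilityMeasure ν']
    (hS : ∀ᵐ y ∂ν, y ∈ S d) (hS' : ∀ᵐ y ∂ν', y ∈ S d)
    (hlap : ∀ k : Fin d → ℕ,
      ∫ y, ∏ j, Real.exp (-(k j : ℝ) * y j) ∂ν = ∫ y, ∏ j, Real.exp (-(k j : ℝ) * y j) ∂ν') :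
    ν = ν' := by
  set ρ := ν.map (Phi d) with hρdef
  set ρ' := ν'.map (Phi d) with hρ'def
  have hρP : IsProbabilityMeasure ρ := Measure.isProbabilityMeasure_map Phi_measurable.aemeasurable
  have hρ'P : IsProbabilityMeasure ρ' := Measure.isProbabilityMeasure_map Phi_measurable.aemeasurable
  have hmono : ∀ (μ : Measure (Fin d → ℝ)), (∀ᵐ y ∂μ, y ∈ S d) → ∀ kk : Fin d → ℕ,
      ∫ x, ∏ j, ((x j : ℝ)) ^ (kk j) ∂(μ.map (Phi d))
        = ∫ y, ∏ j, Real.exp (-(kk j : ℝ) * y j) ∂μ := by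
    intro μ hSμ kk
    rw [integral_map Phi_measurable.aemeasurable]
    · apply integral_congr_ae
      filter_upwards [hSμ] with y hy
      apply Finset.prod_congr rfl
      intro j _
      have hmem : Real.exp (-(y j)) ∈ Set.Icc (0:ℝ) 1 := by
        constructor
        · exact (Real.exp_pos _).le
        · apply Real.exp_le_one_iff.mpr
          have := hy j
          linarith
      have hval : ((Phi d y j : ℝ)) = Real.exp (-(y j)) := by
        unfold Phi
        rw [Set.projIcc_of_mem zero_le_one hmem]
      rw [hval, ← Real.exp_nat_mul]
      congr 1
      ring
    · apply Continuous.aestronglyMeasurable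
      apply continuous_finset_prod
      intro j _
      exact (continuous_subtype_val.comp (continuous_apply j)).pow _
  have hρeq : ρ = ρ' := by
    apply measure_eq_onX
    intro kk
    rw [hmono ν hS kk, hmono ν' hS' kk]
    exact hlap kk
  -- invert
  have hinv : ∀ (μ : Measure (Fin d → ℝ)), (∀ᵐ y ∂μ, y ∈ S d) →
      μ = (μ.map (Phi d)).map (Psi d) := by
    intro μ hSμ
    rw [Measure.map_map Psi_measurable Phi_measurable]
    have : μ = μ.map id := (Measure.map_id).symm
    nth_rewrite 1 [this]
    apply Measure.map_congr
    filter_upwards [hSμ] with y hy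
    funext j
    show y j = -Real.log ((Phi d y j : ℝ))
    have hmem : Real.exp (-(y j)) ∈ Set.Icc (0:ℝ) 1 := by
      constructor
      · exact (Real.exp_pos _).le
      · apply Real.exp_le_one_iff.mpr
        have := hy j
        linarith
    have hval : ((Phi d y j : ℝ)) = Real.exp (-(y j)) := by
      unfold Phi
      rw [Set.projIcc_of_mem zero_le_one hmem]
    rw [hval, Real.log_exp, neg_neg]
  rw [hinv ν hS, hinv ν' hS']
  rw [← hρdef, ← hρ'def, hρeq]

end SW

section Front
open scoped NNReal ENNReal

def pc (d : ℕ) (ν : Measure (Fin d → ℝ)) : Measure (Fin d → ℕ) :=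
  ν.bind (fun y => Measure.pi (fun j => (poissonPMF (Real.toNNReal (y j))).toMeasure))

lemma pmfreal_cont (n : ℕ) : Continuous (fun r : ℝ≥0 => poissonPMFReal r n) := by
  unfold poissonPMFReal
  apply Continuous.div_const
  apply Continuous.mul
  · exact Real.continuous_exp.comp (NNReal.continuous_coe.neg)
  · exact (NNReal.continuous_coe).pow n

lemma kernel_measurable :
    Measurable (fun y : Fin d → ℝ =>
      Measure.pi (fun j => (poissonPMF (Real.toNNReal (y j))).toMeasure)) := by
  apply Measure.measurable_of_measurable_coe
  intro s hs
  have hdecomp : ∀ y : Fin d → ℝ,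
      (Measure.pi (fun j => (poissonPMF (Real.toNNReal (y j))).toMeasure)) s
      = ∑' n : s, ∏ j, poissonPMF (Real.toNNReal (y j)) ((n : Fin d → ℕ) j) := by
    intro y
    have hsu : s = ⋃ n : s, {(n : Fin d → ℕ)} := by
      ext m
      simp
    calc (Measure.pi (fun j => (poissonPMF (Real.toNNReal (y j))).toMeasure)) s
        = (Measure.pi (fun j => (poissonPMF (Real.toNNReal (y j))).toMeasure))
            (⋃ n : s, {(n : Fin d → ℕ)}) := by rw [← hsu]
      _ = ∑' n : s, (Measure.pi (fun j => (poissonPMF (Real.toNNReal (y j))).toMeasure))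
            {(n : Fin d → ℕ)} := by
          apply measure_iUnion
          · intro m n hmn
            simp only [Function.onFun, Set.disjoint_singleton]
            exact fun h => hmn (Subtype.ext h)
          · exact fun n => measurableSet_singleton _
      _ = ∑' n : s, ∏ j, poissonPMF (Real.toNNReal (y j)) ((n : Fin d → ℕ) j) := by
          apply tsum_congr
          intro n
          rw [← Set.univ_pi_singleton (n : Fin d → ℕ), Measure.pi_pi]
          apply Finset.prod_congr rfl
          intro j _
          exact PMF.toMeasure_apply_singleton _ _ (measurableSet_singleton _)
  simp_rw [hdecomp]
  apply Measurable.ennreal_tsum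
  intro n
  apply Finset.measurable_prod
  intro j _
  show Measurable fun y : Fin d → ℝ =>
    ENNReal.ofReal (poissonPMFReal (Real.toNNReal (y j)) ((n : Fin d → ℕ) j))
  apply ENNReal.measurable_ofReal.comp
  apply Continuous.measurable
  exact (pmfreal_cont _).comp (continuous_real_toNNReal.comp (continuous_apply j))

lemma pc_singleton (ν : Measure (Fin d → ℝ)) (k : Fin d → ℕ) :
    pc d ν {k} = ∫⁻ y, ∏ j, poissonPMF (Real.toNNReal (y j)) (k j) ∂ν := by
  unfold pc
  rw [Measure.bind_apply (measurableSet_singleton k) kernel_measurable.aemeasurable]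
  congr 1
  funext y
  rw [← Set.univ_pi_singleton k, Measure.pi_pi]
  apply Finset.prod_congr rfl
  intro j _
  exact PMF.toMeasure_apply_singleton _ _ (measurableSet_singleton _)

lemma H1_of_pc {ν ν' : Measure (Fin d → ℝ)} [IsProbabilityMeasure ν] [IsProbabilityMeasure ν']
    (hS : ∀ᵐ y ∂ν, y ∈ S d) (hS' : ∀ᵐ y ∂ν', y ∈ S d)
    (hcomp : pc d ν = pc d ν') (k : Fin d → ℕ) :
    mK ν (fun _ => 1) k = mK ν' (fun _ => 1) k := by
  have hE : ∫⁻ y, ∏ j, poissonPMF (Real.toNNReal (y j)) (k j) ∂ν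
      = ∫⁻ y, ∏ j, poissonPMF (Real.toNNReal (y j)) (k j) ∂ν' := by
    rw [← pc_singleton, ← pc_singleton, hcomp]
  set gk : (Fin d → ℝ) → ℝ := fun y => ∏ j, poissonPMFReal (Real.toNNReal (y j)) (k j) with hgkdef
  have hgk_nonneg : ∀ y, 0 ≤ gk y :=
    fun y => Finset.prod_nonneg (fun j _ => poissonPMFReal_nonneg)
  have hgk_cont : Continuous gk := by
    apply continuous_finset_prod
    intro j _
    exact (pmfreal_cont _).comp (continuous_real_toNNReal.comp (continuous_apply j))
  have hgk_le_one : ∀ y, gk y ≤ 1 := by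
    intro y
    apply Finset.prod_le_one (fun j _ => poissonPMFReal_nonneg)
    intro j _
    exact le_hasSum (poissonPMFRealSum (Real.toNNReal (y j))) (k j)
      (fun _ _ => poissonPMFReal_nonneg)
  have hgk_int : ∀ (μ : Measure (Fin d → ℝ)) [IsProbabilityMeasure μ], Integrable gk μ := by
    intro μ _
    apply Integrable.mono' (integrable_const (1:ℝ)) hgk_cont.aestronglyMeasurable
    apply ae_of_all
    intro y
    rw [Real.norm_eq_abs, abs_of_nonneg (hgk_nonneg y)]
    exact hgk_le_one y
  have hlift : ∀ (μ : Measure (Fin d → ℝ)) [IsProbabilityMeasure μ],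
      ∫⁻ y, ∏ j, poissonPMF (Real.toNNReal (y j)) (k j) ∂μ = ENNReal.ofReal (∫ y, gk y ∂μ) := by
    intro μ _
    rw [ofReal_integral_eq_lintegral_ofReal (hgk_int μ) (ae_of_all _ hgk_nonneg)]
    apply lintegral_congr
    intro y
    rw [hgkdef]
    exact (ENNReal.ofReal_prod_of_nonneg (fun j _ => poissonPMFReal_nonneg)).symm
  rw [hlift ν, hlift ν'] at hE
  have hgkeq : ∫ y, gk y ∂ν = ∫ y, gk y ∂ν' :=
    (ENNReal.ofReal_eq_ofReal_iff (integral_nonneg hgk_nonneg) (integral_nonneg hgk_nonneg)).mp hE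
  -- relate mK to gk
  set C : ℝ := ∏ j, ((k j).factorial : ℝ) with hCdef
  have hmKeq : ∀ (μ : Measure (Fin d → ℝ)), (∀ᵐ y ∂μ, y ∈ S d) →
      mK μ (fun _ => 1) k = C * ∫ y, gk y ∂μ := by
    intro μ hSμ
    rw [mK, ← integral_const_mul]
    apply integral_congr_ae
    filter_upwards [hSμ] with y hy
    rw [hgkdef]
    show itg (fun _ => 1) k y = C * ∏ j, poissonPMFReal (Real.toNNReal (y j)) (k j)
    rw [hCdef, ← Finset.prod_mul_distrib]
    unfold itg
    apply Finset.prod_congr rfl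
    intro j _
    unfold poissonPMFReal
    rw [Real.coe_toNNReal _ (hy j).le]
    have hf : ((k j).factorial : ℝ) ≠ 0 := by positivity
    field_simp
  rw [hmKeq ν hS, hmKeq ν' hS', hgkeq]

/-- Main abstract identifiability result. -/
theorem pc_injective {ν ν' : Measure (Fin d → ℝ)}
    [IsProbabilityMeasure ν] [IsProbabilityMeasure ν']
    (hS : ∀ᵐ y ∂ν, y ∈ S d) (hS' : ∀ᵐ y ∂ν', y ∈ S d)
    (hcomp : pc d ν = pc d ν') : ν = ν' :=
  measure_eq_of_lap hS hS'
    (lap hS hS' (allc hS hS' (H1_of_pc hS hS' hcomp)))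

end Front


lemma pc_eq {d : ℕ} (ν : Measure (Fin d → ℝ)) : pc d ν = poissonCompound d ν := rfl

lemma S_measurable {d : ℕ} : MeasurableSet (S d) := by
  have : S d = ⋂ j, {y : Fin d → ℝ | 0 < y j} := by
    ext y
    simp [S]
  rw [this]
  exact MeasurableSet.iInter (fun j => measurableSet_lt measurable_const (measurable_pi_apply j))

end PoissonRed
end

/-- Reduction from Poisson observational noise to the noiseless setting: if
`σ : ℝ → ℝ` is a bicontinuous bijection onto `(0, ∞)` and the Poisson compounds of the
laws of `f = σ ∘ g` and `f̃ = σ ∘ g̃` (under the standard Gaussian) agree, then the laws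
of `f` and `f̃` agree, and the laws of `g` and `g̃` agree. -/
theorem poisson_noise_reduction_to_noiseless
    (p d : ℕ) (σ : ℝ → ℝ)
    (hσ : Topology.IsEmbedding σ) (hσrange : Set.range σ = Set.Ioi (0 : ℝ))
    (g g' : (Fin p → ℝ) → (Fin d → ℝ)) (hg : Measurable g) (hg' : Measurable g')
    (h : poissonCompound d (Measure.map (fun u => fun j => σ (g u j)) (stdGaussian p))
        = poissonCompound d (Measure.map (fun u => fun j => σ (g' u j)) (stdGaussian p))) :
    Measure.map (fun u => fun j => σ (g u j)) (stdGaussian p)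
        = Measure.map (fun u => fun j => σ (g' u j)) (stdGaussian p)
      ∧ Measure.map g (stdGaussian p) = Measure.map g' (stdGaussian p) := by
  classical
  have hσc : Continuous σ := hσ.continuous
  have hP0 : IsProbabilityMeasure (Measure.pi (fun _ : Fin p => gaussianReal 0 1)) :=
    inferInstance
  have hP : IsProbabilityMeasure (stdGaussian p) := hP0
  have hf : Measurable (fun u : (Fin p → ℝ) => fun j => σ (g u j)) := by
    apply measurable_pi_lambda
    intro j
    exact hσc.measurable.comp ((measurable_pi_apply j).comp hg)
  have hf' : Measurable (fun u : (Fin p → ℝ) => fun j => σ (g' u j)) := by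
    apply measurable_pi_lambda
    intro j
    exact hσc.measurable.comp ((measurable_pi_apply j).comp hg')
  set ν := Measure.map (fun u => fun j => σ (g u j)) (stdGaussian p) with hνdef
  set ν' := Measure.map (fun u => fun j => σ (g' u j)) (stdGaussian p) with hν'def
  haveI := hP
  have hνP : IsProbabilityMeasure ν := Measure.isProbabilityMeasure_map hf.aemeasurable
  have hν'P : IsProbabilityMeasure ν' := Measure.isProbabilityMeasure_map hf'.aemeasurable
  have hpos : ∀ x : ℝ, 0 < σ x := by
    intro x
    have : σ x ∈ Set.range σ := Set.mem_range_self x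
    rw [hσrange] at this
    exact this
  have hS : ∀ᵐ y ∂ν, y ∈ PoissonRed.S d :=
    (ae_map_iff hf.aemeasurable PoissonRed.S_measurable).mpr
      (ae_of_all _ (fun u j => hpos (g u j)))
  have hS' : ∀ᵐ y ∂ν', y ∈ PoissonRed.S d :=
    (ae_map_iff hf'.aemeasurable PoissonRed.S_measurable).mpr
      (ae_of_all _ (fun u j => hpos (g' u j)))
  have h1 : ν = ν' := by
    apply PoissonRed.pc_injective hS hS'
    rw [PoissonRed.pc_eq, PoissonRed.pc_eq]
    exact h
  refine ⟨h1, ?_⟩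
  -- invert σ
  set e := Topology.IsEmbedding.toHomeomorph hσ with hedef
  set τ : ℝ → ℝ := fun x => if hx : x ∈ Set.range σ then e.symm ⟨x, hx⟩ else 0 with hτdef
  have hτσ : ∀ x, τ (σ x) = x := by
    intro x
    have hx : σ x ∈ Set.range σ := Set.mem_range_self x
    rw [hτdef]
    simp only [dif_pos hx]
    have hex : e x = ⟨σ x, hx⟩ := by
      apply Subtype.ext
      rfl
    rw [← hex, Homeomorph.symm_apply_apply]
  have hτm : Measurable τ := by
    have hms : MeasurableSet (Set.range σ) := by
      rw [hσrange]
      exact measurableSet_Ioi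
    exact Measurable.dite (f := fun z : ↥(Set.range σ) => (e.symm z : ℝ))
      (g := fun _ : ↥(Set.range σ)ᶜ => (0:ℝ)) e.symm.continuous.measurable measurable_const hms
  set T : (Fin d → ℝ) → (Fin d → ℝ) := fun v j => τ (v j) with hTdef
  have hTm : Measurable T :=
    measurable_pi_lambda _ (fun j => hτm.comp (measurable_pi_apply j))
  have hcomp1 : T ∘ (fun u : (Fin p → ℝ) => fun j => σ (g u j)) = g := by
    funext u
    funext j
    show τ (σ (g u j)) = g u j
    exact hτσ _
  have hcomp2 : T ∘ (fun u : (Fin p → ℝ) => fun j => σ (g' u j)) = g' := by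
    funext u
    funext j
    exact hτσ _
  calc Measure.map g (stdGaussian p)
      = Measure.map (T ∘ fun u => fun j => σ (g u j)) (stdGaussian p) :=
        (congrArg (fun q => Measure.map q (stdGaussian p)) hcomp1).symm
    _ = Measure.map T ν := (Measure.map_map hTm hf).symm
    _ = Measure.map T ν' := by rw [h1]
    _ = Measure.map (T ∘ fun u => fun j => σ (g' u j)) (stdGaussian p) :=
        Measure.map_map hTm hf'
    _ = Measure.map g' (stdGaussian p) :=
        congrArg (fun q => Measure.map q (stdGaussian p)) hcomp2
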